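/- Let ω = (ω_1,…,ω_k) with 1 = ω_1 > ω_2 ≥ ⋯ ≥ ω_k ≥ 0 define a unit-decreasing Thiele rule. Consider the election with candidates A = {a_1,…,a_k} ∪ B = {b_1,…,b_k} (disjoint), voters v_{i,j} for i,j ∈ [k] approving exactly {a_i, b_j}, and one voter v^s with empty approval set. Then every size-k committee has ω-score at most k², and B achieves score exactly k², so B is winning. If E' is obtained by adding an approval for a_1 to v^s, then A is the unique ω-winning committee of E', with score k² + 1. In particular, the unit-decreasing Thiele rule is k-Add-robust: the winning committee B of E is disjoint from the unique winning committee A of E'. -/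

import Mathlib

open Finset

/-- ω-Thiele score of committee `S`: each voter `v` contributes
`ω 0 + ω 1 + ⋯ + ω (|A(v) ∩ S| - 1)` (here `ω 0` plays the role of `ω_1`). -/
def thieleScore {V C : Type*} [Fintype V] [DecidableEq C]
    (ω : ℕ → ℚ) (A : V → Finset C) (S : Finset C) : ℚ :=
  ∑ v : V, ∑ i ∈ Finset.range ((A v ∩ S).card), ω i

/-- Candidates `a_1, …, a_k` (left) and `b_1, …, b_k` (right). -/
abbrev TCand (k : ℕ) := Fin k ⊕ Fin k

def tAset (k : ℕ) : Finset (TCand k) := Finset.univ.image Sum.inl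
def tBset (k : ℕ) : Finset (TCand k) := Finset.univ.image Sum.inr

/-- Voters `v_{i,j}` approving `{a_i, b_j}` and a voter `v^s` with empty approval set. -/
def tProfile (k : ℕ) : (Fin k × Fin k) ⊕ Unit → Finset (TCand k)
  | Sum.inl (i, j) => {Sum.inl i, Sum.inr j}
  | Sum.inr _ => ∅

/-- The profile after adding an approval for `a_1` to `v^s`'s vote. -/
def tProfile' (k : ℕ) (hk : 0 < k) : (Fin k × Fin k) ⊕ Unit → Finset (TCand k) :=
  Function.update (tProfile k) (Sum.inr ())
    (insert (Sum.inl ⟨0, hk⟩) (tProfile k (Sum.inr ())))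

def lcount {k : ℕ} (S : Finset (TCand k)) : ℕ :=
  (Finset.univ.filter fun i : Fin k => Sum.inl i ∈ S).card
def rcount {k : ℕ} (S : Finset (TCand k)) : ℕ :=
  (Finset.univ.filter fun i : Fin k => Sum.inr i ∈ S).card

lemma count_card {k : ℕ} (S : Finset (TCand k)) : lcount S + rcount S = S.card := by
  classical
  rw [lcount, rcount,
    ← Finset.card_image_of_injective _ (Sum.inl_injective (α := Fin k) (β := Fin k)),
    ← Finset.card_image_of_injective _ (Sum.inr_injective (α := Fin k) (β := Fin k)),
    ← Finset.card_union_of_disjoint (by simp [Finset.disjoint_left])]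
  congr 1
  ext x; cases x <;> simp

lemma voter_contrib {k : ℕ} (ω : ℕ → ℚ) (hω0 : ω 0 = 1) (i j : Fin k)
    (S : Finset (TCand k)) :
    ∑ m ∈ Finset.range ((({Sum.inl i, Sum.inr j} : Finset (TCand k)) ∩ S).card), ω m
      = (if Sum.inl i ∈ S then (1:ℚ) else 0) + (if Sum.inr j ∈ S then (1:ℚ) else 0)
        - (if Sum.inl i ∈ S then (1:ℚ) else 0) * (if Sum.inr j ∈ S then (1:ℚ) else 0)
          * (1 - ω 1) := by
  classical
  have hne : (Sum.inl i : TCand k) ≠ Sum.inr j := by simp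
  by_cases h1 : Sum.inl i ∈ S <;> by_cases h2 : (Sum.inr j : TCand k) ∈ S
  · rw [Finset.insert_inter_of_mem h1, Finset.singleton_inter_of_mem h2,
      Finset.card_insert_of_notMem (by simp)]
    simp [Finset.sum_range_succ, hω0, h1, h2]; try ring
  · rw [Finset.insert_inter_of_mem h1, Finset.singleton_inter_of_notMem h2]
    simp [Finset.sum_range_succ, hω0, h1, h2]
  · rw [Finset.insert_inter_of_notMem h1, Finset.singleton_inter_of_mem h2]
    simp [Finset.sum_range_succ, hω0, h1, h2]
  · rw [Finset.insert_inter_of_notMem h1, Finset.singleton_inter_of_notMem h2]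
    simp [h1, h2]

lemma score_formula {k : ℕ} (ω : ℕ → ℚ) (hω0 : ω 0 = 1) (S : Finset (TCand k)) :
    thieleScore ω (tProfile k) S
      = k * lcount S + k * rcount S - lcount S * rcount S * (1 - ω 1) := by
  classical
  rw [thieleScore, Fintype.sum_sum_type]
  have hunit : ∑ v : Unit, ∑ m ∈ Finset.range ((tProfile k (Sum.inr v) ∩ S).card), ω m = 0 := by
    simp [tProfile]
  rw [hunit, add_zero, Fintype.sum_prod_type]
  have key : ∀ i j : Fin k,
      ∑ m ∈ Finset.range ((tProfile k (Sum.inl (i, j)) ∩ S).card), ω m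
        = (if Sum.inl i ∈ S then (1:ℚ) else 0) + (if Sum.inr j ∈ S then (1:ℚ) else 0)
          - (if Sum.inl i ∈ S then (1:ℚ) else 0) * (if Sum.inr j ∈ S then (1:ℚ) else 0)
            * (1 - ω 1) := fun i j => voter_contrib ω hω0 i j S
  simp only [key]
  have hA : ∑ i : Fin k, (if Sum.inl i ∈ S then (1:ℚ) else 0) = (lcount S : ℚ) := by
    rw [Finset.sum_boole]; rfl
  have hB : ∑ j : Fin k, (if Sum.inr j ∈ S then (1:ℚ) else 0) = (rcount S : ℚ) := by
    rw [Finset.sum_boole]; rfl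
  simp only [Finset.sum_sub_distrib, Finset.sum_add_distrib, Finset.sum_const,
    Finset.card_univ, Fintype.card_fin, nsmul_eq_mul, ← Finset.mul_sum, ← Finset.sum_mul, hA, hB]
  try ring

lemma score'_formula {k : ℕ} (hk : 0 < k) (ω : ℕ → ℚ) (hω0 : ω 0 = 1)
    (S : Finset (TCand k)) :
    thieleScore ω (tProfile' k hk) S
      = thieleScore ω (tProfile k) S
        + (if Sum.inl (⟨0, hk⟩ : Fin k) ∈ S then (1:ℚ) else 0) := by
  classical
  rw [thieleScore, thieleScore, Fintype.sum_sum_type, Fintype.sum_sum_type]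
  have h1 : ∑ x : Fin k × Fin k, ∑ m ∈ Finset.range ((tProfile' k hk (Sum.inl x) ∩ S).card), ω m
      = ∑ x : Fin k × Fin k, ∑ m ∈ Finset.range ((tProfile k (Sum.inl x) ∩ S).card), ω m := by
    apply Finset.sum_congr rfl
    intro x _
    rw [tProfile', Function.update_of_ne (by simp)]
  have hval : tProfile' k hk (Sum.inr ()) = {Sum.inl (⟨0, hk⟩ : Fin k)} := by
    rw [tProfile', Function.update_self]; simp [tProfile]
  have h2 : ∑ v : Unit, ∑ m ∈ Finset.range ((tProfile' k hk (Sum.inr v) ∩ S).card), ω m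
      = (if Sum.inl (⟨0, hk⟩ : Fin k) ∈ S then (1:ℚ) else 0) := by
    by_cases h : Sum.inl (⟨0, hk⟩ : Fin k) ∈ S
    · simp [hval, Finset.singleton_inter_of_mem h, hω0, h]
    · simp [hval, Finset.singleton_inter_of_notMem h, h]
  have h3 : ∑ v : Unit, ∑ m ∈ Finset.range ((tProfile k (Sum.inr v) ∩ S).card), ω m = 0 := by
    simp [tProfile]
  rw [h1, h2, h3, add_zero]

lemma lcount_A {k : ℕ} : lcount (tAset k) = k := by
  simp [lcount, tAset, Finset.filter_true_of_mem]
lemma rcount_A {k : ℕ} : rcount (tAset k) = 0 := by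
  simp [rcount, tAset]
lemma lcount_B {k : ℕ} : lcount (tBset k) = 0 := by
  simp [lcount, tBset]
lemma rcount_B {k : ℕ} : rcount (tBset k) = k := by
  simp [rcount, tBset, Finset.filter_true_of_mem]
lemma card_A {k : ℕ} : (tAset k).card = k := by
  rw [tAset, Finset.card_image_of_injective _ Sum.inl_injective]; simp

/-- for any unit-decreasing Thiele rule
(`1 = ω_1 > ω_2 ≥ ⋯ ≥ ω_k ≥ 0`, indexed here from `0`), in the above election
every size-`k` committee scores at most `k²`, `B` scores exactly `k²` (so is winning);
after adding an approval for `a_1` to `v^s`, `A` scores `k² + 1` and is the unique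
winning committee; `A` and `B` are disjoint, so the rule is `k`-Add-robust. -/
theorem unit_decreasing_thiele_k_add_robust (k : ℕ) (hk : 0 < k) (ω : ℕ → ℚ)
    (hω0 : ω 0 = 1)
    (hωlt : ∀ i, 1 ≤ i → i < k → ω i < 1)
    (hωmono : ∀ i j, i ≤ j → j < k → ω j ≤ ω i)
    (hωnonneg : ∀ i, i < k → 0 ≤ ω i) :
    (∀ S : Finset (TCand k), S.card = k → thieleScore ω (tProfile k) S ≤ (k : ℚ) ^ 2) ∧
    thieleScore ω (tProfile k) (tBset k) = (k : ℚ) ^ 2 ∧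
    (∀ S : Finset (TCand k), S.card = k →
      thieleScore ω (tProfile k) S ≤ thieleScore ω (tProfile k) (tBset k)) ∧
    thieleScore ω (tProfile' k hk) (tAset k) = (k : ℚ) ^ 2 + 1 ∧
    (∀ S : Finset (TCand k), S.card = k →
      (∀ T : Finset (TCand k), T.card = k →
        thieleScore ω (tProfile' k hk) T ≤ thieleScore ω (tProfile' k hk) S) →
      S = tAset k) ∧
    Disjoint (tAset k) (tBset k) := by
  classical
  -- nonnegativity of the correction term, and strict positivity when both sides occur
  have hnn : ∀ S : Finset (TCand k), S.card = k →
      0 ≤ (lcount S : ℚ) * rcount S * (1 - ω 1) := by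
    intro S hS
    rcases Nat.eq_zero_or_pos (lcount S) with h | h
    · simp [h]
    rcases Nat.eq_zero_or_pos (rcount S) with h' | h'
    · simp [h']
    have hk2 : 2 ≤ k := by
      have := count_card S; omega
    have hlt := hωlt 1 le_rfl (by omega)
    have h0 : (0:ℚ) ≤ (lcount S : ℚ) * rcount S := by positivity
    nlinarith
  have hksq : ∀ S : Finset (TCand k), S.card = k →
      (k:ℚ) * lcount S + (k:ℚ) * rcount S = (k:ℚ)^2 := by
    intro S hS
    have h : ((lcount S : ℚ) + rcount S) = (k:ℚ) := by
      have := count_card S; rw [hS] at this; exact_mod_cast this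
    linear_combination (k:ℚ) * h
  have hbound : ∀ S : Finset (TCand k), S.card = k →
      thieleScore ω (tProfile k) S ≤ (k:ℚ)^2 := by
    intro S hS
    rw [score_formula ω hω0 S]
    have := hnn S hS
    have := hksq S hS
    linarith
  have hscoreB : thieleScore ω (tProfile k) (tBset k) = (k:ℚ)^2 := by
    rw [score_formula ω hω0, lcount_B, rcount_B]
    push_cast; ring
  have ha1A : Sum.inl (⟨0, hk⟩ : Fin k) ∈ tAset k := by simp [tAset]
  have hscoreA' : thieleScore ω (tProfile' k hk) (tAset k) = (k:ℚ)^2 + 1 := by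
    rw [score'_formula hk ω hω0, score_formula ω hω0, lcount_A, rcount_A, if_pos ha1A]
    push_cast; ring
  refine ⟨hbound, hscoreB, fun S hS => (hbound S hS).trans_eq hscoreB.symm, hscoreA', ?_, ?_⟩
  · intro S hS hmax
    have h := hmax (tAset k) card_A
    rw [hscoreA', score'_formula hk ω hω0, score_formula ω hω0] at h
    have hnnS := hnn S hS
    have hksqS := hksq S hS
    by_cases hmem : Sum.inl (⟨0, hk⟩ : Fin k) ∈ S
    · rw [if_pos hmem] at h
      have hzero : (lcount S : ℚ) * rcount S * (1 - ω 1) = 0 := by linarith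
      have hl : 0 < lcount S :=
        Finset.card_pos.mpr ⟨⟨0, hk⟩, by simp [hmem]⟩
      have hr : rcount S = 0 := by
        by_contra hr'
        have hr0 : 0 < rcount S := Nat.pos_of_ne_zero hr'
        have hk2 : 2 ≤ k := by have := count_card S; omega
        have hlt := hωlt 1 le_rfl (by omega)
        have hpos : (0:ℚ) < (lcount S : ℚ) * rcount S * (1 - ω 1) := by
          have h1 : (0:ℚ) < (lcount S : ℚ) := by exact_mod_cast hl
          have h2 : (0:ℚ) < (rcount S : ℚ) := by exact_mod_cast hr0
          have h3 : (0:ℚ) < 1 - ω 1 := by linarith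
          positivity
        linarith
      have hlk : lcount S = k := by have := count_card S; omega
      have huniv : (Finset.univ.filter fun i : Fin k => Sum.inl i ∈ S) = Finset.univ := by
        apply Finset.eq_univ_of_card
        simpa [lcount] using hlk
      have hsub : tAset k ⊆ S := by
        intro x hx
        obtain ⟨i, -, rfl⟩ := Finset.mem_image.mp hx
        have : i ∈ (Finset.univ.filter fun i : Fin k => Sum.inl i ∈ S) := by
          rw [huniv]; exact Finset.mem_univ i
        simpa using this
      exact (Finset.eq_of_subset_of_card_le hsub (by rw [hS, card_A])).symm
    · rw [if_neg hmem] at h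
      exfalso; linarith
  · rw [Finset.disjoint_left]
    rintro x hx hx'
    simp only [tAset, tBset, Finset.mem_image] at hx hx'
    obtain ⟨i, -, rfl⟩ := hx
    obtain ⟨j, -, hj⟩ := hx'
    exact Sum.inr_ne_inl hj
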